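/- Let n ≥ 2, ℓ, k ≥ 1, Y ∈ ℝ^{n×ℓ}, and let Z ∈ ℝ^{n×k} satisfy the second-order inequality ⟨ŻŻᵀ, (Δ*∘Δ)(ZZᵀ − YYᵀ)⟩ + (1/2)·‖Δ(ŻZᵀ + ZŻᵀ)‖_F² ≥ 0 for every Ż ∈ ℝ^{n×k}. Then for every positive semidefinite S ∈ Sym(n) and every positive semidefinite T ∈ Sym(k): 0 ≤ tr(T)·⟨S, (Δ*∘Δ)(ZZᵀ − YYᵀ)⟩ + 2·⟨Δ(Z T Zᵀ), Δ(S)⟩. -/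

import Mathlib

open Matrix

namespace SNL

noncomputable def delta {n : ℕ} (X : Matrix (Fin n) (Fin n) ℝ) : Matrix (Fin n) (Fin n) ℝ :=
  Matrix.of fun i j => (X i i + X j j - 2 * X i j) / 2

noncomputable def deltaStar {n : ℕ} (H : Matrix (Fin n) (Fin n) ℝ) : Matrix (Fin n) (Fin n) ℝ :=
  Matrix.diagonal (fun i => ∑ k, H i k) - H

def frobInner {n m : ℕ} (X Y : Matrix (Fin n) (Fin m) ℝ) : ℝ := ∑ i, ∑ j, X i j * Y i j

def frobNormSq {n m : ℕ} (X : Matrix (Fin n) (Fin m) ℝ) : ℝ := frobInner X X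

noncomputable def snlCost {n ℓ k : ℕ} (Y : Matrix (Fin n) (Fin ℓ) ℝ)
    (Z : Matrix (Fin n) (Fin k) ℝ) : ℝ :=
  frobNormSq (delta (Z * Zᵀ - Y * Yᵀ))

def IsFirstOrderCritical {n ℓ k : ℕ} (Y : Matrix (Fin n) (Fin ℓ) ℝ)
    (Z : Matrix (Fin n) (Fin k) ℝ) : Prop :=
  deltaStar (delta (Z * Zᵀ - Y * Yᵀ)) * Z = 0

def IsSecondOrderCritical {n ℓ k : ℕ} (Y : Matrix (Fin n) (Fin ℓ) ℝ)
    (Z : Matrix (Fin n) (Fin k) ℝ) : Prop :=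
  IsFirstOrderCritical Y Z ∧
    ∀ W : Matrix (Fin n) (Fin k) ℝ,
      0 ≤ frobInner (W * Wᵀ) (deltaStar (delta (Z * Zᵀ - Y * Yᵀ)))
          + (1 / 2) * frobNormSq (delta (W * Zᵀ + Z * Wᵀ))

noncomputable def centering (n : ℕ) : Matrix (Fin n) (Fin n) ℝ :=
  1 - ((n : ℝ)⁻¹) • Matrix.of (fun _ _ => (1 : ℝ))

def diagM {n : ℕ} (X : Matrix (Fin n) (Fin n) ℝ) : Matrix (Fin n) (Fin n) ℝ :=
  Matrix.diagonal (fun i => X i i)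

noncomputable def Gamma {n : ℕ} (X : Matrix (Fin n) (Fin n) ℝ) : Matrix (Fin n) (Fin n) ℝ :=
  centering n * diagM X * centering n

noncomputable def Psi {n : ℕ} (X : Matrix (Fin n) (Fin n) ℝ) : Matrix (Fin n) (Fin n) ℝ :=
  ((n : ℝ) / 2) • (centering n * diagM X * centering n) +
    ((1 / 2) * Matrix.trace X) • centering n

noncomputable def lambdaMax {n : ℕ} (X : Matrix (Fin n) (Fin n) ℝ) : ℝ :=
  sSup {r : ℝ | ∃ v : Fin n → ℝ, (∑ i, v i ^ 2) = 1 ∧ r = v ⬝ᵥ (X *ᵥ v)}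

end SNL

open SNL Matrix

section Helpers

private lemma sum_comm3 {α β γ : Type*} [Fintype α] [Fintype β] [Fintype γ]
    (f : α → β → γ → ℝ) :
    ∑ i : α, ∑ j : β, ∑ a : γ, f i j a = ∑ a : γ, ∑ i : α, ∑ j : β, f i j a := by
  rw [Finset.sum_congr rfl fun i _ => Finset.sum_comm, Finset.sum_comm]

private lemma sum_comm4 {α β γ δ : Type*} [Fintype α] [Fintype β] [Fintype γ] [Fintype δ]
    (f : α → β → γ → δ → ℝ) :
    ∑ a : α, ∑ b : β, ∑ i : γ, ∑ j : δ, f a b i j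
      = ∑ i : γ, ∑ j : δ, ∑ a : α, ∑ b : β, f a b i j := by
  rw [Finset.sum_congr rfl fun a _ => (sum_comm3 fun i j b => f a b i j).symm,
    Finset.sum_comm]
  exact Finset.sum_congr rfl fun i _ => Finset.sum_comm

private lemma keyB_gen {n k N : ℕ} (p : Fin N → Fin n → ℝ) (q : Fin k → Fin n → ℝ) :
    ∑ a, ∑ b, ∑ i, ∑ j, (1 / 2 : ℝ) * ((p a i - p a j) * (q b i - q b j)) ^ 2
      = 2 * ∑ i, ∑ j, (∑ b, (q b i - q b j) ^ 2 / 2) * (∑ a, (p a i - p a j) ^ 2 / 2) := by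
  rw [sum_comm4, Finset.mul_sum]
  refine Finset.sum_congr rfl fun i _ => ?_
  rw [Finset.mul_sum]
  refine Finset.sum_congr rfl fun j _ => ?_
  rw [Finset.sum_mul_sum, Finset.mul_sum]
  conv_lhs => rw [Finset.sum_comm]
  refine Finset.sum_congr rfl fun b _ => ?_
  rw [Finset.mul_sum]
  exact Finset.sum_congr rfl fun a _ => by ring

end Helpers

theorem statement_6 {n ℓ k : ℕ} (hn : 2 ≤ n) (hℓ : 1 ≤ ℓ) (hk : 1 ≤ k)
    (Y : Matrix (Fin n) (Fin ℓ) ℝ) (Z : Matrix (Fin n) (Fin k) ℝ)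
    (h2 : ∀ W : Matrix (Fin n) (Fin k) ℝ,
      0 ≤ frobInner (W * Wᵀ) (deltaStar (delta (Z * Zᵀ - Y * Yᵀ)))
          + (1 / 2) * frobNormSq (delta (W * Zᵀ + Z * Wᵀ)))
    (S : Matrix (Fin n) (Fin n) ℝ) (hS : S.PosSemidef)
    (T : Matrix (Fin k) (Fin k) ℝ) (hT : T.PosSemidef) :
    0 ≤ Matrix.trace T * frobInner S (deltaStar (delta (Z * Zᵀ - Y * Yᵀ)))
        + 2 * frobInner (delta (Z * T * Zᵀ)) (delta S) := by
  open scoped MatrixOrder in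
  obtain ⟨A, hA⟩ := CStarAlgebra.nonneg_iff_eq_star_mul_self.mp hS.nonneg
  open scoped MatrixOrder in
  obtain ⟨B, hB⟩ := CStarAlgebra.nonneg_iff_eq_star_mul_self.mp hT.nonneg
  rw [Matrix.star_eq_conjTranspose, Matrix.conjTranspose_eq_transpose_of_trivial] at hA hB
  set M := deltaStar (delta (Z * Zᵀ - Y * Yᵀ)) with hM
  set Q : Matrix (Fin n) (Fin k) ℝ := Z * Bᵀ with hQdef
  set W : Fin n → Fin k → Matrix (Fin n) (Fin k) ℝ :=
    fun a b => Matrix.of (fun i r => A a i * B b r) with hW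
  have hQ : ∀ (b : Fin k) (i : Fin n), Q i b = ∑ r, Z i r * B b r := by
    intro b i
    simp [hQdef, Matrix.mul_apply]
  have hSij : ∀ i j, S i j = ∑ a, A a i * A a j := by
    intro i j
    simp [hA, Matrix.mul_apply]
  have hZT : ∀ i j, (Z * T * Zᵀ) i j = ∑ b, Q i b * Q j b := by
    intro i j
    have h : Z * T * Zᵀ = Q * Qᵀ := by
      rw [hB, hQdef, Matrix.transpose_mul, Matrix.transpose_transpose,
        Matrix.mul_assoc, Matrix.mul_assoc, ← Matrix.mul_assoc]
    rw [h]
    simp [Matrix.mul_apply]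
  have hdZT : ∀ i j, delta (Z * T * Zᵀ) i j = ∑ b, (Q i b - Q j b) ^ 2 / 2 := by
    intro i j
    simp only [delta, Matrix.of_apply, hZT]
    rw [Finset.sum_congr rfl (fun b (_ : b ∈ Finset.univ) => show (Q i b - Q j b) ^ 2 / 2
      = (Q i b * Q i b / 2 + Q j b * Q j b / 2) - Q i b * Q j b by ring),
      Finset.sum_sub_distrib, Finset.sum_add_distrib, ← Finset.sum_div, ← Finset.sum_div]
    ring
  have hdS : ∀ i j, delta S i j = ∑ a, (A a i - A a j) ^ 2 / 2 := by
    intro i j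
    simp only [delta, Matrix.of_apply, hSij]
    rw [Finset.sum_congr rfl (fun a (_ : a ∈ Finset.univ) => show (A a i - A a j) ^ 2 / 2
      = (A a i * A a i / 2 + A a j * A a j / 2) - A a i * A a j by ring),
      Finset.sum_sub_distrib, Finset.sum_add_distrib, ← Finset.sum_div, ← Finset.sum_div]
    ring
  have c1 : ∀ a b, frobInner (W a b * (W a b)ᵀ) M
      = (∑ r, B b r ^ 2) * (∑ i, ∑ j, A a i * A a j * M i j) := by
    intro a b
    simp only [frobInner, Matrix.mul_apply, Matrix.transpose_apply, hW, Matrix.of_apply]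
    rw [Finset.mul_sum]
    refine Finset.sum_congr rfl fun i _ => ?_
    rw [Finset.mul_sum]
    refine Finset.sum_congr rfl fun j _ => ?_
    rw [Finset.sum_mul, Finset.sum_mul]
    exact Finset.sum_congr rfl fun r _ => by ring
  have hE : ∀ a b i j, delta (W a b * Zᵀ + Z * (W a b)ᵀ) i j
      = (A a i - A a j) * (Q i b - Q j b) := by
    intro a b i j
    have e1 : ∀ x y : Fin n, (W a b * Zᵀ) x y = A a x * Q y b := by
      intro x y
      rw [hQ]
      simp only [Matrix.mul_apply, Matrix.transpose_apply, hW, Matrix.of_apply, Finset.mul_sum]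
      exact Finset.sum_congr rfl fun r _ => by ring
    have e2 : ∀ x y : Fin n, (Z * (W a b)ᵀ) x y = A a y * Q x b := by
      intro x y
      rw [hQ]
      simp only [Matrix.mul_apply, Matrix.transpose_apply, hW, Matrix.of_apply, Finset.mul_sum]
      exact Finset.sum_congr rfl fun r _ => by ring
    simp only [delta, Matrix.of_apply, Matrix.add_apply, e1, e2]
    ring
  have c2 : ∀ a b, frobNormSq (delta (W a b * Zᵀ + Z * (W a b)ᵀ))
      = ∑ i, ∑ j, ((A a i - A a j) * (Q i b - Q j b)) ^ 2 := by
    intro a b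
    simp only [frobNormSq, frobInner, hE]
    exact Finset.sum_congr rfl fun i _ => Finset.sum_congr rfl fun j _ => by ring
  have hTr : Matrix.trace T = ∑ b, ∑ r, B b r ^ 2 := by
    rw [hB]
    simp only [Matrix.trace, Matrix.diag_apply, Matrix.mul_apply, Matrix.transpose_apply]
    rw [Finset.sum_comm]
    exact Finset.sum_congr rfl fun b _ => Finset.sum_congr rfl fun r _ => by ring
  have hSM : frobInner S M = ∑ a, ∑ i, ∑ j, A a i * A a j * M i j := by
    simp only [frobInner, hSij, Finset.sum_mul]
    exact sum_comm3 fun i j a => A a i * A a j * M i j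
  have keyA : ∑ a, ∑ b, frobInner (W a b * (W a b)ᵀ) M
      = Matrix.trace T * frobInner S M := by
    simp only [c1]
    rw [hTr, hSM, Finset.sum_mul_sum]
    conv_lhs => rw [Finset.sum_comm]
  have keyB : ∑ a, ∑ b, (1 / 2 : ℝ) * frobNormSq (delta (W a b * Zᵀ + Z * (W a b)ᵀ))
      = 2 * frobInner (delta (Z * T * Zᵀ)) (delta S) := by
    simp only [c2, Finset.mul_sum]
    refine (keyB_gen A (fun b i => Q i b)).trans ?_
    simp only [frobInner, hdZT, hdS]
  have total : Matrix.trace T * frobInner S M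
      + 2 * frobInner (delta (Z * T * Zᵀ)) (delta S)
      = ∑ a, ∑ b, (frobInner (W a b * (W a b)ᵀ) M
          + (1 / 2 : ℝ) * frobNormSq (delta (W a b * Zᵀ + Z * (W a b)ᵀ))) := by
    rw [← keyA, ← keyB, ← Finset.sum_add_distrib]
    exact Finset.sum_congr rfl fun a _ => Finset.sum_add_distrib.symm
  rw [total]
  exact Finset.sum_nonneg fun a _ => Finset.sum_nonneg fun b _ => h2 (W a b)
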